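/- arXiv:1605.02043 — 4 statements merged into one kernel-verified Lean document; each statement's English description precedes it below -/
import Mathlib

section
/- Let D' be obtained from D by the clone-and-connect transformation, and let VP be any vertex partition of D' into k clusters that cuts no original edge. Then the number of auxiliary edges cut by VP is at least the vertex-cut cost of the edge partition of D reconstructed from VP. -/
lemma key_aux {k : ℕ} (f : ℕ → Fin k) :
    ∀ n, ((Finset.range n).image f).card ≤
      1 + ((Finset.range (n - 1)).filter (fun i => f i ≠ f (i + 1))).card := by
  intro n
  induction n with
  | zero => simp
  | succ n ih =>
    cases n with
    | zero => simp
    | succ m =>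
      rw [Finset.range_add_one, Finset.image_insert]
      have hprev : Nat.succ m - 1 = m := rfl
      rw [hprev] at ih
      have hf : ((Finset.range (m + 1)).filter (fun i => f i ≠ f (i + 1))).card
          = ((Finset.range m).filter (fun i => f i ≠ f (i + 1))).card
            + (if f m ≠ f (m + 1) then 1 else 0) := by
        rw [Finset.range_add_one, Finset.filter_insert]
        split
        · rw [Finset.card_insert_of_notMem (by simp)]
        · simp
      have hfe : Nat.succ m + 1 - 1 = m + 1 := rfl
      rw [hfe, hf]
      by_cases h : f m = f (m + 1)
      · have hmem : f (m + 1) ∈ (Finset.range (m + 1)).image f :=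
          Finset.mem_image.2 ⟨m, by simp, h⟩
        rw [Finset.insert_eq_self.2 hmem, if_neg (not_not_intro h)]
        omega
      · have := Finset.card_insert_le (f (m + 1)) ((Finset.range (m + 1)).image f)
        rw [if_pos h]
        omega

/-- for any clone-and-connect transform (given by a path ordering σ v of the
incident edges of each vertex) and any vertex partition Q of the clones cutting no original
edge (encoded by assigning each original edge a cluster), the number of cut auxiliary edges
is at least the vertex-cut cost of the reconstructed edge partition. -/
theorem stmt5 {V : Type*} [Fintype V] [DecidableEq V] (G : SimpleGraph V)
    [DecidableRel G.Adj] {k : ℕ} (Q : Sym2 V → Fin k) (σ : V → ℕ → Sym2 V)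
    (hσ : ∀ v : V, Set.BijOn (σ v) ↑(Finset.range (G.degree v)) ↑(G.incidenceFinset v)) :
    ∑ v : V, (((G.incidenceFinset v).image Q).card - 1) ≤
      ∑ v : V, ((Finset.range (G.degree v - 1)).filter
        (fun i => Q (σ v i) ≠ Q (σ v (i + 1)))).card := by
  apply Finset.sum_le_sum
  intro v _
  have himg : (Finset.range (G.degree v)).image (σ v) = G.incidenceFinset v := by
    apply Finset.coe_injective
    rw [Finset.coe_image]
    exact (hσ v).image_eq
  have h1 : (G.incidenceFinset v).image Q
      = (Finset.range (G.degree v)).image (fun i => Q (σ v i)) := by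
    rw [← himg, Finset.image_image]
    rfl
  have := key_aux (fun i => Q (σ v i)) (G.degree v)
  rw [h1]
  omega
end

section
/- Given a finite graph D and an edge partition EP of D into k clusters, there exists a clone-and-connect transformation D' of D (i.e., a choice of path orderings on each clone set) and a vertex partition of D' cutting no original edge whose auxiliary-edge cut cost equals exactly the vertex-cut cost of EP. -/
private theorem adjCount {α β : Type*} [PartialOrder β] [DecidableEq β]
    (f : α → β) (d : α) :
    ∀ (l : List α), l.Pairwise (fun x y => f x ≤ f y) →
      ((Finset.range (l.length - 1)).filter
          (fun i => f (l.getD i d) ≠ f (l.getD (i + 1) d))).card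
        = (l.map f).toFinset.card - 1
  | [], _ => by simp
  | [a], _ => by simp
  | a :: b :: l, h => by
    have ih := adjCount f d (b :: l) h.tail
    have h' := List.pairwise_cons.mp h
    have hab : f a ≤ f b := h'.1 b (by simp)
    have hQ : ∀ i, ((a :: b :: l).getD (i + 1) d) = ((b :: l).getD i d) := fun i => rfl
    have hlen : (a :: b :: l).length - 1 = ((b :: l).length - 1) + 1 := by simp
    rw [hlen, Finset.card_filter, Finset.sum_range_succ']
    simp only [hQ]
    have h0 : (a :: b :: l).getD 0 d = a := rfl
    rw [h0]
    have hsum : ∑ i ∈ Finset.range ((b :: l).length - 1),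
        (if f ((b :: l).getD i d) ≠ f ((b :: l).getD (i + 1) d) then 1 else 0)
        = ((Finset.range ((b :: l).length - 1)).filter
            (fun i => f ((b :: l).getD i d) ≠ f ((b :: l).getD (i + 1) d))).card := by
      rw [Finset.card_filter]
    rw [hsum, ih]
    have hbl0 : (b :: l).getD 0 d = b := rfl
    rw [hbl0]
    by_cases hfab : f a = f b
    · simp only [hfab, ne_eq, not_true_eq_false, if_false, add_zero]
      have : ((a :: b :: l).map f).toFinset = ((b :: l).map f).toFinset := by
        simp [List.toFinset_cons, hfab]
      rw [this]
    · simp only [ne_eq, hfab, not_false_eq_true, if_true]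
      have hnot : f a ∉ ((b :: l).map f).toFinset := by
        simp only [List.mem_toFinset, List.mem_map]
        rintro ⟨x, hx, hfx⟩
        have hbx : f b ≤ f x := by
          rcases List.mem_cons.mp hx with rfl | hx'
          · exact le_refl _
          · exact (List.pairwise_cons.mp h.tail).1 x hx'
        exact hfab (le_antisymm hab (hfx ▸ hbx))
      have : ((a :: b :: l).map f).toFinset = insert (f a) ((b :: l).map f).toFinset := by
        simp [List.toFinset_cons]
      rw [this, Finset.card_insert_of_notMem hnot]
      have hpos : 0 < ((b :: l).map f).toFinset.card := by
        refine Finset.card_pos.mpr ⟨f b, ?_⟩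
        simp
      omega

private theorem list_toFinset_map {α β : Type*} [DecidableEq α] [DecidableEq β]
    (f : α → β) (l : List α) : (l.map f).toFinset = l.toFinset.image f := by
  ext x; simp

/-- given an edge partition P, there is a clone-and-connect transformation
(a path ordering σ v of each vertex's incident edges) such that the induced vertex partition
(cutting no original edge) cuts exactly p_v - 1 auxiliary edges at each vertex v, hence its
total auxiliary cut cost equals the vertex-cut cost of P. -/
theorem stmt6 {V : Type*} [Fintype V] [DecidableEq V] (G : SimpleGraph V)
    [DecidableRel G.Adj] (hpos : ∀ v : V, 0 < G.degree v) {k : ℕ} (P : Sym2 V → Fin k) :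
    ∃ σ : V → ℕ → Sym2 V,
      (∀ v : V, Set.BijOn (σ v) ↑(Finset.range (G.degree v)) ↑(G.incidenceFinset v)) ∧
      ∀ v : V, ((Finset.range (G.degree v - 1)).filter
          (fun i => P (σ v i) ≠ P (σ v (i + 1)))).card =
        ((G.incidenceFinset v).image P).card - 1 := by
  classical
  set L : V → List (Sym2 V) := fun v =>
    (G.incidenceFinset v).toList.mergeSort (fun a b => P a ≤ P b) with hL
  have hperm : ∀ v, (L v).Perm (G.incidenceFinset v).toList := fun v =>
    List.mergeSort_perm _ _
  have hlen : ∀ v, (L v).length = G.degree v := fun v => by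
    rw [(hperm v).length_eq, Finset.length_toList,
      SimpleGraph.card_incidenceFinset_eq_degree]
  have hnodup : ∀ v, (L v).Nodup := fun v =>
    (hperm v).nodup_iff.mpr (Finset.nodup_toList _)
  have hsorted : ∀ v, (L v).Pairwise (fun x y => P x ≤ P y) := by
    intro v
    have := List.pairwise_mergeSort (le := fun a b : Sym2 V => decide (P a ≤ P b))
      (fun a b c hab hbc => by
        simp only [decide_eq_true_eq] at *; exact le_trans hab hbc)
      (fun a b => by
        simp only [Bool.or_eq_true, decide_eq_true_eq]; exact le_total _ _)
      (G.incidenceFinset v).toList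
    exact this.imp (fun h => by simpa using h)
  refine ⟨fun v i => (L v).getD i (Sym2.diag v), fun v => ?_, fun v => ?_⟩
  · constructor
    · intro i hi
      simp only [Finset.coe_range, Set.mem_Iio] at hi
      have hi' : i < (L v).length := by rw [hlen]; exact hi
      show (L v).getD i (Sym2.diag v) ∈ ↑(G.incidenceFinset v)
      rw [List.getD_eq_getElem _ _ hi']
      have h1 : (L v)[i] ∈ L v := List.getElem_mem _
      have h2 := (hperm v).mem_iff.mp h1
      simpa using (Finset.mem_toList.mp h2)
    constructor
    · intro i hi j hj hij
      simp only [Finset.coe_range, Set.mem_Iio] at hi hj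
      have hi' : i < (L v).length := by rw [hlen]; exact hi
      have hj' : j < (L v).length := by rw [hlen]; exact hj
      have hij' : (L v).getD i (Sym2.diag v) = (L v).getD j (Sym2.diag v) := hij
      rw [List.getD_eq_getElem _ _ hi', List.getD_eq_getElem _ _ hj'] at hij'
      have : (⟨i, hi'⟩ : Fin (L v).length) = ⟨j, hj'⟩ :=
        (hnodup v).get_inj_iff.mp (by simpa [List.get_eq_getElem] using hij')
      exact congrArg Fin.val this
    · intro e he
      simp only [Finset.coe_range, Set.mem_Iio]
      have : e ∈ L v := (hperm v).mem_iff.mpr (Finset.mem_toList.mpr (by simpa using he))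
      obtain ⟨n, hn⟩ := List.mem_iff_get.mp this
      refine ⟨n.1, by rw [← hlen]; exact n.2, ?_⟩
      show (L v).getD n.1 (Sym2.diag v) = e
      rw [List.getD_eq_getElem _ _ n.2]
      simpa [List.get_eq_getElem] using hn
  · have := adjCount P (Sym2.diag v) (L v) (hsorted v)
    rw [hlen] at this
    have hfin : (L v).toFinset = G.incidenceFinset v := by
      ext x
      simp only [List.mem_toFinset, (hperm v).mem_iff, Finset.mem_toList]
    rw [this, list_toFinset_map, hfin]
end

section
/- Let OPT_ep(D) be the minimum vertex-cut cost over all balanced k-way edge partitions of D, and for a fixed clone-and-connect transformation D' let OPT_vp(D') be the minimum auxiliary-edge cut cost over corresponding balanced vertex partitions of D' cutting no original edge. Then OPT_ep(D) ≤ OPT_vp(D') ≤ (d_max − 1) · OPT_ep(D), where d_max is the maximum degree of D, provided OPT_ep(D) ≥ 1 (equivalently, OPT_ep(D) > 0) — in the case OPT_ep(D) = 0 one has OPT_vp(D') = 0 as well. -/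
open Finset

/-- Number of adjacent changes bounds number of distinct values minus one. -/
lemma changes_lemma {α : Type*} [DecidableEq α] (g : ℕ → α) (n : ℕ) :
    ((Finset.range (n + 1)).image g).card ≤
      1 + ((Finset.range n).filter (fun i => g i ≠ g (i + 1))).card := by
  induction n with
  | zero => simp
  | succ n ih =>
    rw [Finset.range_add_one (n := n + 1), Finset.image_insert]
    by_cases h : g n = g (n + 1)
    · have hmem : g (n + 1) ∈ (Finset.range (n + 1)).image g := by
        refine Finset.mem_image.mpr ⟨n, ?_, h⟩
        simp
      rw [Finset.insert_eq_self.mpr hmem]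
      refine ih.trans ?_
      have : ((Finset.range n).filter (fun i => g i ≠ g (i + 1))) ⊆
          ((Finset.range (n + 1)).filter (fun i => g i ≠ g (i + 1))) :=
        Finset.filter_subset_filter _ (by simp [Finset.range_subset]; omega)
      exact Nat.add_le_add_left (Finset.card_le_card this) 1
    · have h1 : (insert (g (n + 1)) ((Finset.range (n + 1)).image g)).card ≤
          ((Finset.range (n + 1)).image g).card + 1 := Finset.card_insert_le _ _
      have h2 : ((Finset.range (n + 1)).filter (fun i => g i ≠ g (i + 1))) =
          insert n ((Finset.range n).filter (fun i => g i ≠ g (i + 1))) := by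
        rw [Finset.range_add_one, Finset.filter_insert, if_pos h]
      have h3 : n ∉ (Finset.range n).filter (fun i => g i ≠ g (i + 1)) := by
        simp
      rw [h2, Finset.card_insert_of_notMem h3]
      omega

lemma keylem {V : Type*} [Fintype V] [DecidableEq V] (G : SimpleGraph V)
    [DecidableRel G.Adj] {k : ℕ}
    (hpos : ∀ v : V, 0 < G.degree v)
    (σ : V → ℕ → Sym2 V)
    (hσ : ∀ v : V, Set.BijOn (σ v) ↑(Finset.range (G.degree v)) ↑(G.incidenceFinset v))
    (P : Sym2 V → Fin k) (v : V) :
    (((G.incidenceFinset v).image P).card - 1 ≤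
      ((Finset.range (G.degree v - 1)).filter (fun i => P (σ v i) ≠ P (σ v (i + 1)))).card)
    ∧ ((Finset.range (G.degree v - 1)).filter (fun i => P (σ v i) ≠ P (σ v (i + 1)))).card
      ≤ (G.maxDegree - 1) * (((G.incidenceFinset v).image P).card - 1) := by
  have hd : G.degree v - 1 + 1 = G.degree v := Nat.succ_pred_eq_of_pos (hpos v)
  have himg : (Finset.range (G.degree v)).image (σ v) = G.incidenceFinset v := by
    apply Finset.coe_injective
    rw [Finset.coe_image]
    exact (hσ v).image_eq
  have himg2 : (G.incidenceFinset v).image P =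
      (Finset.range (G.degree v)).image (fun i => P (σ v i)) := by
    rw [← himg, Finset.image_image]
    rfl
  have key1 : ((G.incidenceFinset v).image P).card - 1 ≤
      ((Finset.range (G.degree v - 1)).filter (fun i => P (σ v i) ≠ P (σ v (i + 1)))).card := by
    have := changes_lemma (fun i => P (σ v i)) (G.degree v - 1)
    rw [hd] at this
    rw [himg2]
    omega
  refine ⟨key1, ?_⟩
  by_cases hp : ((G.incidenceFinset v).image P).card ≤ 1
  · -- all values equal, filter is empty
    have hcard : ((Finset.range (G.degree v)).image (fun i => P (σ v i))).card ≤ 1 := by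
      rw [← himg2]; exact hp
    have hfe : ((Finset.range (G.degree v - 1)).filter
        (fun i => P (σ v i) ≠ P (σ v (i + 1)))) = ∅ := by
      apply Finset.filter_false_of_mem
      intro i hi
      simp only [Finset.mem_range] at hi
      have hi1 : i ∈ Finset.range (G.degree v) := Finset.mem_range.mpr (by omega)
      have hi2 : i + 1 ∈ Finset.range (G.degree v) := Finset.mem_range.mpr (by omega)
      have m1 : P (σ v i) ∈ (Finset.range (G.degree v)).image (fun i => P (σ v i)) :=
        Finset.mem_image_of_mem _ hi1
      have m2 : P (σ v (i + 1)) ∈ (Finset.range (G.degree v)).image (fun i => P (σ v i)) :=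
        Finset.mem_image_of_mem _ hi2
      have := Finset.card_le_one.mp hcard _ m1 _ m2
      simp [this]
    rw [hfe]
    simp
  · push_neg at hp
    have hdm : G.degree v ≤ G.maxDegree := G.degree_le_maxDegree v
    have hb : ((Finset.range (G.degree v - 1)).filter
        (fun i => P (σ v i) ≠ P (σ v (i + 1)))).card ≤ G.degree v - 1 := by
      calc _ ≤ (Finset.range (G.degree v - 1)).card := Finset.card_le_card (Finset.filter_subset _ _)
        _ = G.degree v - 1 := Finset.card_range _
    have hm : G.maxDegree - 1 ≤ (G.maxDegree - 1) * (((G.incidenceFinset v).image P).card - 1) :=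
      Nat.le_mul_of_pos_right _ (by omega)
    omega

/-- OPT_ep(D) ≤ OPT_vp(D') ≤ (d_max - 1) · OPT_ep(D) when OPT_ep(D) ≥ 1,
and OPT_vp(D') = 0 when OPT_ep(D) = 0. -/
theorem stmt8 {V : Type*} [Fintype V] [DecidableEq V] (G : SimpleGraph V)
    [DecidableRel G.Adj] {k : ℕ} (hk : 0 < k) (hdvd : k ∣ G.edgeFinset.card)
    (hpos : ∀ v : V, 0 < G.degree v) (hdmax : 2 ≤ G.maxDegree)
    (σ : V → ℕ → Sym2 V)
    (hσ : ∀ v : V, Set.BijOn (σ v) ↑(Finset.range (G.degree v)) ↑(G.incidenceFinset v)) :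
    let Balanced : (Sym2 V → Fin k) → Prop := fun P =>
      ∀ i : Fin k, (G.edgeFinset.filter (fun e => P e = i)).card = G.edgeFinset.card / k
    let A := sInf {c : ℕ | ∃ P : Sym2 V → Fin k, Balanced P ∧
      ∑ v : V, (((G.incidenceFinset v).image P).card - 1) = c}
    let B := sInf {c : ℕ | ∃ Q : Sym2 V → Fin k, Balanced Q ∧
      ∑ v : V, ((Finset.range (G.degree v - 1)).filter
        (fun i => Q (σ v i) ≠ Q (σ v (i + 1)))).card = c}
    A ≤ B ∧ (1 ≤ A → B ≤ (G.maxDegree - 1) * A) ∧ (A = 0 → B = 0) := by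
  intro Balanced A B
  have keyAB : ∀ P : Sym2 V → Fin k,
      (∑ v : V, (((G.incidenceFinset v).image P).card - 1)) ≤
        ∑ v : V, ((Finset.range (G.degree v - 1)).filter
          (fun i => P (σ v i) ≠ P (σ v (i + 1)))).card :=
    fun P => Finset.sum_le_sum fun v _ => (keylem G hpos σ hσ P v).1
  have keyBA : ∀ P : Sym2 V → Fin k,
      (∑ v : V, ((Finset.range (G.degree v - 1)).filter
          (fun i => P (σ v i) ≠ P (σ v (i + 1)))).card) ≤
        (G.maxDegree - 1) * ∑ v : V, (((G.incidenceFinset v).image P).card - 1) := by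
    intro P
    rw [Finset.mul_sum]
    exact Finset.sum_le_sum fun v _ => (keylem G hpos σ hσ P v).2
  by_cases hne : ∃ P : Sym2 V → Fin k, Balanced P
  · have hSA : {c : ℕ | ∃ P : Sym2 V → Fin k, Balanced P ∧
        ∑ v : V, (((G.incidenceFinset v).image P).card - 1) = c}.Nonempty := by
      obtain ⟨P, hP⟩ := hne
      exact ⟨_, P, hP, rfl⟩
    have hSB : {c : ℕ | ∃ Q : Sym2 V → Fin k, Balanced Q ∧
        ∑ v : V, ((Finset.range (G.degree v - 1)).filter
          (fun i => Q (σ v i) ≠ Q (σ v (i + 1)))).card = c}.Nonempty := by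
      obtain ⟨P, hP⟩ := hne
      exact ⟨_, P, hP, rfl⟩
    obtain ⟨Q, hQ, hQB⟩ := Nat.sInf_mem hSB
    obtain ⟨P, hP, hPA⟩ := Nat.sInf_mem hSA
    have h1 : A ≤ B := by
      calc A ≤ ∑ v : V, (((G.incidenceFinset v).image Q).card - 1) :=
            Nat.sInf_le ⟨Q, hQ, rfl⟩
        _ ≤ _ := keyAB Q
        _ = B := hQB
    have h2 : B ≤ (G.maxDegree - 1) * A := by
      calc B ≤ ∑ v : V, ((Finset.range (G.degree v - 1)).filter
              (fun i => P (σ v i) ≠ P (σ v (i + 1)))).card :=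
            Nat.sInf_le ⟨P, hP, rfl⟩
        _ ≤ (G.maxDegree - 1) * ∑ v : V, (((G.incidenceFinset v).image P).card - 1) := keyBA P
        _ = (G.maxDegree - 1) * A := by rw [hPA]
    refine ⟨h1, fun _ => h2, fun h0 => ?_⟩
    rw [h0, mul_zero] at h2
    exact Nat.le_zero.mp h2
  · have hSA : {c : ℕ | ∃ P : Sym2 V → Fin k, Balanced P ∧
        ∑ v : V, (((G.incidenceFinset v).image P).card - 1) = c} = ∅ := by
      ext c; simp only [Set.mem_setOf_eq, Set.mem_empty_iff_false, iff_false]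
      rintro ⟨P, hP, -⟩; exact hne ⟨P, hP⟩
    have hSB : {c : ℕ | ∃ Q : Sym2 V → Fin k, Balanced Q ∧
        ∑ v : V, ((Finset.range (G.degree v - 1)).filter
          (fun i => Q (σ v i) ≠ Q (σ v (i + 1)))).card = c} = ∅ := by
      ext c; simp only [Set.mem_setOf_eq, Set.mem_empty_iff_false, iff_false]
      rintro ⟨P, hP, -⟩; exact hne ⟨P, hP⟩
    have hA : A = 0 := by simp only [A, hSA, Nat.sInf_empty]
    have hB : B = 0 := by simp only [B, hSB, Nat.sInf_empty]
    refine ⟨?_, ?_, ?_⟩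
    · rw [hA]; exact Nat.zero_le _
    · intro h; rw [hA] at h; exact absurd h (by norm_num)
    · exact fun _ => hB
end

section
/- A balanced k-way vertex partition of the clone-and-connect transform D' (each cluster receiving 2m/k cloned vertices, where m = |E(D)|) that cuts no original edge induces a perfectly balanced k-way edge partition of D (each cluster receiving m/k edges), and conversely. -/
open Finset

lemma card_mem_eq_two {V : Type*} [Fintype V] [DecidableEq V] {e : Sym2 V}
    (he : ¬ e.IsDiag) : (univ.filter (· ∈ e)).card = 2 := by
  induction e with
  | _ a b =>
    rw [Sym2.isDiag_iff_proj_eq] at he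
    have : univ.filter (· ∈ s(a, b)) = {a, b} := by
      ext v; simp [Sym2.mem_iff]
    rw [this, card_insert_of_notMem (by simpa using he), card_singleton]

lemma double_count {V : Type*} [Fintype V] [DecidableEq V] (G : SimpleGraph V)
    [DecidableRel G.Adj] (p : Sym2 V → Prop) [DecidablePred p] :
    ∑ v : V, ((G.incidenceFinset v).filter p).card =
      2 * (G.edgeFinset.filter p).card := by
  calc ∑ v : V, ((G.incidenceFinset v).filter p).card
      = ∑ v : V, ∑ e ∈ G.edgeFinset.filter p, if v ∈ e then 1 else 0 := by
        refine Finset.sum_congr rfl fun v _ => ?_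
        rw [G.incidenceFinset_eq_filter, Finset.filter_comm, Finset.card_filter]
    _ = ∑ e ∈ G.edgeFinset.filter p, ∑ v : V, if v ∈ e then 1 else 0 :=
        Finset.sum_comm
    _ = ∑ e ∈ G.edgeFinset.filter p, 2 := by
        refine Finset.sum_congr rfl fun e he => ?_
        rw [← Finset.card_filter]
        refine card_mem_eq_two ?_
        rw [Finset.mem_filter, SimpleGraph.mem_edgeFinset] at he
        exact G.not_isDiag_of_mem_edgeSet he.1
    _ = 2 * (G.edgeFinset.filter p).card := by
        rw [Finset.sum_const, smul_eq_mul, mul_comm]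

/-- a vertex partition of the clone-and-connect transform cutting no original
edge (encoded by a cluster Q e for each original edge e, each clone of v on e receiving
cluster Q e) is balanced on clones (2m/k clones per cluster) iff the induced edge partition
of D is balanced (m/k edges per cluster). -/
theorem stmt15 {V : Type*} [Fintype V] [DecidableEq V] (G : SimpleGraph V)
    [DecidableRel G.Adj] {k : ℕ} (hk : 0 < k) (hdvd : k ∣ G.edgeFinset.card)
    (hpos : ∀ v : V, 0 < G.degree v) (Q : Sym2 V → Fin k) :
    ∀ i : Fin k,
      (∑ v : V, ((G.incidenceFinset v).filter (fun e => Q e = i)).card =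
          2 * G.edgeFinset.card / k ↔
        (G.edgeFinset.filter (fun e => Q e = i)).card = G.edgeFinset.card / k) := by
  intro i
  obtain ⟨c, hc⟩ := hdvd
  rw [double_count, hc, Nat.mul_div_cancel_left _ hk,
    show 2 * (k * c) = k * (2 * c) by ring, Nat.mul_div_cancel_left _ hk]
  omega
end
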